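/- Let I and J be finite types. Consider spans (S, p, q) where S is a finite type, p : S → I and q : S → J; call two spans (S, p, q) and (S', p', q') isomorphic if there is a bijection e : S ≃ S' with p' ∘ e = p and q' ∘ e = q. Then the assignment sending a span (S, p, q) to the function I × J → ℕ given by (i, j) ↦ card {s : S // p s = i ∧ q s = j} induces a bijection between the set of isomorphism classes of such spans (with S ranging over finite types in a fixed universe) and the set of functions I × J → ℕ. -/
import Mathlib


universe u

/-- A span between `I` and `J` with a finite apex. -/
structure FinSpan (I J : Type u) : Type (u + 1) where
  S : Type u
  [fin : Fintype S]
  p : S → I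
  q : S → J

attribute [instance] FinSpan.fin

/-- Two spans are isomorphic if there is a bijection of apexes commuting
with both legs. -/
def FinSpan.Iso {I J : Type u} (A B : FinSpan I J) : Prop :=
  ∃ e : A.S ≃ B.S, B.p ∘ e = A.p ∧ B.q ∘ e = A.q

/-- The matrix of cardinalities of the fibers of a span. -/
noncomputable def FinSpan.card {I J : Type u} (A : FinSpan I J) : I × J → ℕ :=
  fun ij =>
    letI : DecidablePred fun s => A.p s = ij.1 ∧ A.q s = ij.2 := Classical.decPred _
    Fintype.card {s : A.S // A.p s = ij.1 ∧ A.q s = ij.2}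


open Classical in
lemma FinSpan.card_eq {I J : Type u} (A : FinSpan I J) (ij : I × J) :
    A.card ij = Nat.card {s : A.S // (A.p s, A.q s) = ij} := by
  have h0 : A.card ij = Nat.card {s : A.S // A.p s = ij.1 ∧ A.q s = ij.2} := by
    simp only [FinSpan.card]
    letI : DecidablePred fun s => A.p s = ij.1 ∧ A.q s = ij.2 := Classical.decPred _
    exact Nat.card_eq_fintype_card.symm
  rw [h0]
  refine Nat.card_congr (Equiv.subtypeEquivRight (fun s => ?_))
  constructor
  · rintro ⟨h1, h2⟩; exact Prod.ext h1 h2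
  · intro h; exact ⟨congrArg Prod.fst h, congrArg Prod.snd h⟩

open Classical in
lemma FinSpan.card_iso {I J : Type u} {A B : FinSpan I J} (h : A.Iso B) :
    A.card = B.card := by
  obtain ⟨e, hp, hq⟩ := h
  funext ij
  rw [A.card_eq, B.card_eq]
  refine Nat.card_congr (Equiv.subtypeEquiv e (fun s => ?_))
  have hp' : B.p (e s) = A.p s := congrFun hp s
  have hq' : B.q (e s) = A.q s := congrFun hq s
  rw [hp', hq']

open Classical in
lemma FinSpan.iso_of_card_eq {I J : Type u} {A B : FinSpan I J}
    (h : A.card = B.card) : A.Iso B := by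
  have key : ∀ ij : I × J,
      Nonempty ({s : A.S // (A.p s, A.q s) = ij} ≃ {s : B.S // (B.p s, B.q s) = ij}) := by
    intro ij
    apply Fintype.card_eq.mp
    rw [← Nat.card_eq_fintype_card, ← Nat.card_eq_fintype_card, ← A.card_eq, ← B.card_eq, h]
  let f := fun ij => (key ij).some
  let eA : A.S ≃ Σ ij : I × J, {s : A.S // (A.p s, A.q s) = ij} :=
    (Equiv.sigmaFiberEquiv (fun s : A.S => (A.p s, A.q s))).symm
  let eB : (Σ ij : I × J, {s : B.S // (B.p s, B.q s) = ij}) ≃ B.S :=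
    Equiv.sigmaFiberEquiv (fun s : B.S => (B.p s, B.q s))
  let eM : (Σ ij : I × J, {s : A.S // (A.p s, A.q s) = ij}) ≃
      (Σ ij : I × J, {s : B.S // (B.p s, B.q s) = ij}) :=
    Equiv.sigmaCongrRight f
  refine ⟨eA.trans (eM.trans eB), ?_, ?_⟩ <;> funext s <;>
  · simp only [Function.comp_apply, Equiv.trans_apply]
    have := ((f (A.p s, A.q s)) ⟨s, rfl⟩).2
    simp only [eA, eB, eM, Equiv.sigmaFiberEquiv, Equiv.sigmaCongrRight]
    first
      | exact (congrArg Prod.fst this)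
      | exact (congrArg Prod.snd this)

/-- The canonical span with prescribed fiber cardinalities. -/
noncomputable def spanOf {I J : Type u} [Fintype I] [Fintype J] (g : I × J → ℕ) :
    FinSpan I J where
  S := Σ ij : I × J, ULift.{u} (Fin (g ij))
  p x := x.1.1
  q x := x.1.2

/-- The fiber of `Sigma.fst` over `a0` is equivalent to `β a0`. -/
def fibEquiv {α : Type*} {β : α → Type*} (a0 : α) :
    {s : Σ a, β a // s.1 = a0} ≃ β a0 where
  toFun x := x.2 ▸ x.1.2
  invFun b := ⟨⟨a0, b⟩, rfl⟩
  left_inv := by rintro ⟨⟨a, b⟩, rfl⟩; rfl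
  right_inv b := rfl

open Classical in
lemma spanOf_card {I J : Type u} [Fintype I] [Fintype J] (g : I × J → ℕ) :
    (spanOf g).card = g := by
  funext ij
  rw [FinSpan.card_eq]
  have e : {s : Σ ij' : I × J, ULift.{u} (Fin (g ij')) // s.1 = ij} ≃
      ULift.{u} (Fin (g ij)) := fibEquiv ij
  show Nat.card {s : Σ ij' : I × J, ULift.{u} (Fin (g ij')) // s.1 = ij} = g ij
  rw [Nat.card_congr e]
  simp

theorem finSpan_quotient_equiv_matrices
    (I J : Type u) [Fintype I] [Fintype J] :
    Nonempty { e : Quot (FinSpan.Iso (I := I) (J := J)) ≃ (I × J → ℕ) //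
      ∀ A : FinSpan I J, e (Quot.mk _ A) = A.card } := by
  let F : Quot (FinSpan.Iso (I := I) (J := J)) → (I × J → ℕ) :=
    Quot.lift FinSpan.card (fun _ _ h => FinSpan.card_iso h)
  have hbij : Function.Bijective F := by
    constructor
    · rintro ⟨A⟩ ⟨B⟩ h
      exact Quot.sound (FinSpan.iso_of_card_eq h)
    · intro g
      exact ⟨Quot.mk _ (spanOf g), spanOf_card g⟩
  exact ⟨⟨Equiv.ofBijective F hbij, fun A => rfl⟩⟩
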